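/- Let α ∈ (0, 2π), n ≥ 1, 0 < ε < 1 with n·(π/2)·ε < n·(2π − α) − 2π. Let F : ℝ × (0, δ) → ℝ × (0, ∞) satisfy, for (θ₀,r₀) ∈ β̂ = (a,b) × {r₀} with b − a < 2π and 1 ≤ j ≤ n, |θⱼ − (θ₀ + jα)| < j·(π/2)·ε where (θⱼ, rⱼ) = Fʲ(θ₀, r₀). Define H(θ, r) = F(θ, r) − (2π, 0). If Hⁿ(β̂) ∩ (β̂ + (2kπ, 0)) ≠ ∅ for some integer k, then k ≤ −1. -/
import Mathlib


open Real

/-- Lemma 8: for the alternate lift `H = F - (2π, 0)`, if `Hⁿ(β̂)` meets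
`β̂ + (2kπ, 0)` then `k ≤ -1`. -/
theorem alternate_lift_translate_index_neg
    (F : ℝ × ℝ → ℝ × ℝ) (α ε δ a b r₀ : ℝ) (n : ℕ) (k : ℤ)
    (hn : 1 ≤ n)
    (hα0 : 0 < α) (hα1 : α < 2 * π)
    (hε0 : 0 < ε) (hε1 : ε < 1)
    (hna : (n : ℝ) * (π / 2) * ε < (n : ℝ) * (2 * π - α) - 2 * π)
    (ha0 : 0 ≤ a) (ha1 : a < 2 * π) (hab : b - a < 2 * π)
    (hr0 : 0 < r₀) (hrδ : r₀ < δ)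
    (hequiv : ∀ θ r : ℝ, F (θ + 2 * π, r) = ((F (θ, r)).1 + 2 * π, (F (θ, r)).2))
    (hiter : ∀ θ₀ ∈ Set.Ioo a b, ∀ j : ℕ, 1 ≤ j → j ≤ n →
      |(F^[j] (θ₀, r₀)).1 - (θ₀ + (j : ℝ) * α)| < (j : ℝ) * (π / 2) * ε)
    (hint : ∃ θ₀ ∈ Set.Ioo a b, ∃ θ₁ ∈ Set.Ioo a b,
      (fun p : ℝ × ℝ => ((F p).1 - 2 * π, (F p).2))^[n] (θ₀, r₀) =
        (θ₁ + 2 * (k : ℝ) * π, r₀)) :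
    k ≤ -1 := by
  set H : ℝ × ℝ → ℝ × ℝ := fun p => ((F p).1 - 2 * π, (F p).2) with hH
  have hdown : ∀ θ r : ℝ, F (θ - 2 * π, r) = ((F (θ, r)).1 - 2 * π, (F (θ, r)).2) := by
    intro θ r
    have := hequiv (θ - 2 * π) r
    simp only [sub_add_cancel] at this
    rw [this]
    simp
  have hshift : ∀ (m : ℕ) (θ r : ℝ),
      F (θ - 2 * π * m, r) = ((F (θ, r)).1 - 2 * π * m, (F (θ, r)).2) := by
    intro m
    induction m with
    | zero => simp
    | succ m ih =>
      intro θ r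
      have h1 : θ - 2 * π * (m + 1 : ℕ) = (θ - 2 * π * m) - 2 * π := by
        push_cast; ring
      rw [h1, show ((θ - 2 * π * m : ℝ)) - 2 * π = (θ - 2 * π * m) - 2 * π from rfl,
        hdown (θ - 2 * π * m) r, ih θ r]
      rw [Prod.mk.injEq]; push_cast; exact ⟨by ring, rfl⟩
  have hHiter : ∀ (j : ℕ) (θ r : ℝ),
      H^[j] (θ, r) = ((F^[j] (θ, r)).1 - 2 * π * j, (F^[j] (θ, r)).2) := by
    intro j
    induction j with
    | zero => simp
    | succ j ih =>
      intro θ r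
      rw [Function.iterate_succ_apply', Function.iterate_succ_apply', ih θ r]
      have : H ((F^[j] (θ, r)).1 - 2 * π * j, (F^[j] (θ, r)).2)
          = ((F (F^[j] (θ, r))).1 - 2 * π * j - 2 * π, (F (F^[j] (θ, r))).2) := by
        simp only [hH]
        rw [show ((F^[j] (θ, r)).1 - 2 * π * j, (F^[j] (θ, r)).2)
            = (((F^[j] (θ, r)).1, (F^[j] (θ, r)).2).1 - 2 * π * j,
              ((F^[j] (θ, r)).1, (F^[j] (θ, r)).2).2) from rfl,
          hshift j (F^[j] (θ, r)).1 (F^[j] (θ, r)).2]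
      rw [this, Prod.mk.injEq]; push_cast; exact ⟨by ring, rfl⟩
  obtain ⟨θ₀, hθ₀, θ₁, hθ₁, heq⟩ := hint
  have hkey := hiter θ₀ hθ₀ n hn le_rfl
  have hHn := hHiter n θ₀ r₀
  rw [hHn] at heq
  have heq1 : (F^[n] (θ₀, r₀)).1 - 2 * π * n = θ₁ + 2 * (k : ℝ) * π :=
    congrArg Prod.fst heq
  have habs := abs_lt.1 hkey
  have h2 : (F^[n] (θ₀, r₀)).1 < θ₀ + 2 * π * n - 2 * π := by
    nlinarith [habs.2]
  have h3 : 2 * (k : ℝ) * π < 2 * π - 2 * π := by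
    have : θ₀ - θ₁ < 2 * π := by
      have := hθ₀.2; have := hθ₁.1; linarith
    linarith
  have hπ : (0 : ℝ) < π := Real.pi_pos
  have hk : (k : ℝ) < 0 := by nlinarith
  have : k < 0 := by exact_mod_cast hk
  omega
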